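/- Let C, K be nontrivial cones in a real normed space X, S_C := conv(C ∩ S_X), S_K⁰ := conv({0} ∪ (K ∩ S_X)). If 0 ∉ cl(S_C − S_K⁰), then (cl S_K⁰) ∩ (cl S_C) = ∅, and furthermore (cl K) ∩ cl(conv C) = {0} and 0 ∉ cl S_C. -/

import Mathlib

open Set Pointwise

def IsCone {X : Type*} [NormedAddCommGroup X] [NormedSpace ℝ X] (C : Set X) : Prop :=
  0 ∈ C ∧ ∀ t : ℝ, 0 ≤ t → ∀ x ∈ C, t • x ∈ C

private lemma cone_hull_decomp {X : Type*} [NormedAddCommGroup X] [NormedSpace ℝ X]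
    {C : Set X} (hC : IsCone C) :
    convexHull ℝ C ⊆ {(0:X)} ∪
      {p | ∃ t : ℝ, 0 < t ∧ ∃ y ∈ convexHull ℝ (C ∩ Metric.sphere (0:X) 1), p = t • y} := by
  apply convexHull_min
  · intro c hc
    by_cases hc0 : c = 0
    · exact Or.inl hc0
    · have hnc : (0:ℝ) < ‖c‖ := norm_pos_iff.2 hc0
      refine Or.inr ⟨‖c‖, hnc, ‖c‖⁻¹ • c, ?_, ?_⟩
      · apply subset_convexHull
        refine ⟨hC.2 _ (by positivity) _ hc, ?_⟩
        simp [norm_smul, inv_mul_cancel₀ hnc.ne']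
      · rw [smul_smul, mul_inv_cancel₀ hnc.ne', one_smul]
  · rintro p hp q hq a b ha hb hab
    simp only [mem_union, mem_singleton_iff, mem_setOf_eq] at hp hq ⊢
    rcases hp with hp | ⟨t₁, ht₁, y₁, hy₁, rfl⟩
    · rcases hq with hq | ⟨t₂, ht₂, y₂, hy₂, rfl⟩
      · left; simp [hp, hq]
      · rcases eq_or_lt_of_le hb with hb0 | hb0
        · left; simp [hp, ← hb0]
        · right
          exact ⟨b * t₂, mul_pos hb0 ht₂, y₂, hy₂, by simp [hp, smul_smul]⟩
    · rcases hq with hq | ⟨t₂, ht₂, y₂, hy₂, rfl⟩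
      · rcases eq_or_lt_of_le ha with ha0 | ha0
        · left; simp [hq, ← ha0]
        · right
          exact ⟨a * t₁, mul_pos ha0 ht₁, y₁, hy₁, by simp [hq, smul_smul]⟩
      · right
        have hT : 0 < a * t₁ + b * t₂ := by
          rcases eq_or_lt_of_le ha with ha0 | ha0
          · have : b = 1 := by linarith
            nlinarith
          · nlinarith [mul_nonneg hb ht₂.le]
        refine ⟨a * t₁ + b * t₂,
          hT, (a * t₁ / (a * t₁ + b * t₂)) • y₁ + (b * t₂ / (a * t₁ + b * t₂)) • y₂, ?_, ?_⟩
        · exact (convex_convexHull ℝ _) hy₁ hy₂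
            (div_nonneg (mul_nonneg ha ht₁.le) hT.le)
            (div_nonneg (mul_nonneg hb ht₂.le) hT.le)
            (by field_simp)
        · match_scalars <;> field_simp

theorem nonsym_separation_consequences
    {X : Type*} [NormedAddCommGroup X] [NormedSpace ℝ X]
    (C K : Set X) (hC : IsCone C) (hK : IsCone K)
    (hCnt : C ≠ {0} ∧ C ≠ Set.univ) (hKnt : K ≠ {0} ∧ K ≠ Set.univ)
    (h : (0 : X) ∉ closure (convexHull ℝ (C ∩ Metric.sphere (0:X) 1) -
        convexHull ℝ ({0} ∪ (K ∩ Metric.sphere (0:X) 1)))) :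
    closure (convexHull ℝ ({0} ∪ (K ∩ Metric.sphere (0:X) 1))) ∩
        closure (convexHull ℝ (C ∩ Metric.sphere (0:X) 1)) = ∅ ∧
    closure K ∩ closure (convexHull ℝ C) = {0} ∧
    (0 : X) ∉ closure (convexHull ℝ (C ∩ Metric.sphere (0:X) 1)) := by
  set SC := convexHull ℝ (C ∩ Metric.sphere (0:X) 1) with hSC
  set SK := convexHull ℝ ({0} ∪ (K ∩ Metric.sphere (0:X) 1)) with hSK
  -- separation distance δ
  rw [Metric.mem_closure_iff] at h
  push_neg at h
  obtain ⟨δ, hδ0, hδ⟩ := h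
  have hsep : ∀ y ∈ SC, ∀ u ∈ SK, δ ≤ ‖y - u‖ := by
    intro y hy u hu
    have := hδ (y - u) (sub_mem_sub hy hu)
    rw [dist_eq_norm, zero_sub, norm_neg] at this
    exact this
  -- part 1
  have h1 : closure SK ∩ closure SC = ∅ := by
    ext x
    simp only [mem_inter_iff, mem_empty_iff_false, iff_false, not_and]
    intro hxK hxC
    have h0 : (0:X) ∈ closure (SC - SK) := by
      have := map_mem_closure₂ continuous_sub hxC hxK
        (fun a ha b hb => sub_mem_sub ha hb)
      simpa using this
    rw [Metric.mem_closure_iff] at h0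
    obtain ⟨z, hz, hzd⟩ := h0 δ hδ0
    exact absurd hzd (not_lt.2 (hδ z hz))
  -- 0 ∈ closures of things containing 0
  have h0SK : (0:X) ∈ SK := subset_convexHull ℝ _ (Or.inl rfl)
  -- part 3
  have h3 : (0:X) ∉ closure SC := by
    intro h0C
    have : (0:X) ∈ closure SK ∩ closure SC := ⟨subset_closure h0SK, h0C⟩
    rw [h1] at this
    exact this
  refine ⟨h1, ?_, h3⟩
  -- part 2
  apply Set.eq_singleton_iff_unique_mem.2
  constructor
  · exact ⟨subset_closure hK.1, subset_closure (subset_convexHull ℝ C hC.1)⟩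
  · rintro x ⟨hxK, hxC⟩
    by_contra hx0
    have hr : (0:ℝ) < ‖x‖ := norm_pos_iff.2 hx0
    set r := ‖x‖ with hrdef
    set ε := min (r / 2) (δ * r / 16) with hεdef
    have hε0 : 0 < ε := lt_min (by linarith) (by positivity)
    have hε1 : ε ≤ r / 2 := min_le_left _ _
    have hε2 : ε ≤ δ * r / 16 := min_le_right _ _
    obtain ⟨k, hkK, hkd⟩ := Metric.mem_closure_iff.1 hxK ε hε0
    obtain ⟨p, hpC, hpd⟩ := Metric.mem_closure_iff.1 hxC ε hε0
    rw [dist_eq_norm] at hkd hpd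
    have hkn : r - ε ≤ ‖k‖ := by
      have := norm_sub_norm_le x k
      linarith [this.trans hkd.le]
    have hkup : ‖k‖ ≤ r + ε := by
      have := norm_sub_norm_le k x
      rw [norm_sub_rev] at this
      linarith [this.trans hkd.le]
    have hpn : r - ε ≤ ‖p‖ := by
      have := norm_sub_norm_le x p
      linarith [this.trans hpd.le]
    have hk0 : k ≠ 0 := by
      intro hk
      rw [hk, norm_zero] at hkn
      linarith
    have hknpos : (0:ℝ) < ‖k‖ := norm_pos_iff.2 hk0
    have hp0 : p ≠ 0 := by
      intro hp
      rw [hp, norm_zero] at hpn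
      linarith
    rcases cone_hull_decomp hC hpC with hp | ⟨t, ht, y, hy, rfl⟩
    · exact hp0 hp
    -- ‖y‖ ≤ 1
    have hy1 : ‖y‖ ≤ 1 := by
      have hsub : SC ⊆ Metric.closedBall (0:X) 1 := by
        apply convexHull_min
        · intro z hz
          exact Metric.sphere_subset_closedBall hz.2
        · exact convex_closedBall _ _
      simpa using hsub hy
    have htp : ‖t • y‖ ≤ t := by
      rw [norm_smul, Real.norm_eq_abs, abs_of_pos ht]
      nlinarith
    have htr : r - ε ≤ t := le_trans hpn htp
    have htpos : (0:ℝ) < t := by linarith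
    -- w ∈ K ∩ sphere
    have hwK : ‖k‖⁻¹ • k ∈ K ∩ Metric.sphere (0:X) 1 := by
      refine ⟨hK.2 _ (by positivity) _ hkK, ?_⟩
      simp [norm_smul, inv_mul_cancel₀ hknpos.ne']
    set c := min (‖k‖ / t) 1 with hcdef
    have hc0 : 0 ≤ c := le_min (by positivity) zero_le_one
    have hc1 : c ≤ 1 := min_le_right _ _
    have huSK : c • (‖k‖⁻¹ • k) ∈ SK := by
      have := (convex_convexHull ℝ ({(0:X)} ∪ (K ∩ Metric.sphere (0:X) 1)))
        h0SK (subset_convexHull ℝ _ (Or.inr hwK)) (a := 1 - c) (b := c)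
        (by linarith) hc0 (by ring)
      simpa [hSK] using this
    have hkey := hsep y hy _ huSK
    have hpk : ‖t • y - k‖ < 2 * ε := by
      have h1 : ‖t • y - k‖ ≤ ‖t • y - x‖ + ‖x - k‖ := norm_sub_le_norm_sub_add_norm_sub _ _ _
      rw [norm_sub_rev (t • y) x] at h1
      linarith
    have hkt : ‖k‖ - t ≤ 2 * ε := by linarith
    -- main bound: δ * t < 4 * ε
    have hmain : δ * t < 4 * ε := by
      rcases le_or_gt (‖k‖ / t) 1 with hcase | hcase
      · -- c = ‖k‖/t, u = t⁻¹ • k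
        have hceq : c = ‖k‖ / t := min_eq_left hcase
        have hueq : c • (‖k‖⁻¹ • k) = t⁻¹ • k := by
          rw [hceq, smul_smul, div_eq_mul_inv]
          congr 1
          field_simp
        rw [hueq] at hkey
        have hyeq : y - t⁻¹ • k = t⁻¹ • (t • y - k) := by
          rw [smul_sub, smul_smul, inv_mul_cancel₀ htpos.ne', one_smul]
        rw [hyeq, norm_smul, Real.norm_eq_abs, abs_of_pos (by positivity)] at hkey
        have h' : δ * t ≤ ‖t • y - k‖ := by
          have := mul_le_mul_of_nonneg_right hkey htpos.le
          rwa [inv_mul_eq_div, div_mul_cancel₀ _ htpos.ne'] at this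
        linarith
      · -- c = 1, u = ‖k‖⁻¹ • k, and t < ‖k‖
        have htk : t < ‖k‖ := by
          have := (lt_div_iff₀ htpos).1 hcase
          linarith
        have hceq : c = 1 := min_eq_right (by rw [le_div_iff₀ htpos]; linarith)
        rw [hceq, one_smul] at hkey
        have hsplit : ‖y - ‖k‖⁻¹ • k‖ ≤ t⁻¹ * ‖t • y - k‖ + (‖k‖ - t) / t := by
          have h1 : y - ‖k‖⁻¹ • k = t⁻¹ • (t • y - k) + (t⁻¹ - ‖k‖⁻¹) • k := by
            rw [smul_sub, smul_smul, inv_mul_cancel₀ htpos.ne', one_smul, sub_smul]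
            abel
          rw [h1]
          refine (norm_add_le _ _).trans ?_
          rw [norm_smul, norm_smul, Real.norm_eq_abs, Real.norm_eq_abs,
            abs_of_pos (by positivity : (0:ℝ) < t⁻¹),
            abs_of_nonneg (by
              rw [sub_nonneg]
              exact inv_anti₀ htpos htk.le)]
          have : (t⁻¹ - ‖k‖⁻¹) * ‖k‖ = (‖k‖ - t) / t := by
            field_simp
          rw [this]
        have hδb : δ ≤ t⁻¹ * ‖t • y - k‖ + (‖k‖ - t) / t := hkey.trans hsplit
        have h2 : t⁻¹ * ‖t • y - k‖ < t⁻¹ * (2 * ε) :=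
          mul_lt_mul_of_pos_left hpk (by positivity)
        have h3 : (‖k‖ - t) / t ≤ (2 * ε) / t := by
          apply div_le_div_of_nonneg_right hkt htpos.le |>.trans_eq rfl
        have : δ ≤ t⁻¹ * (2 * ε) + (2 * ε) / t := by
          calc δ ≤ t⁻¹ * ‖t • y - k‖ + (‖k‖ - t) / t := hδb
            _ ≤ t⁻¹ * (2 * ε) + (2 * ε) / t := by
                have h3' : (‖k‖ - t) / t ≤ (2 * ε) / t :=
                  div_le_div_of_nonneg_right hkt htpos.le
                linarith
        have heq : t⁻¹ * (2 * ε) + (2 * ε) / t = (4 * ε) / t := by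
          rw [div_eq_inv_mul, div_eq_inv_mul]
          ring
        rw [heq, le_div_iff₀ htpos] at this
        -- δ * t... we get δ * t ≤ 4ε; need strict. Use strict from h2 instead:
        have hstrict : δ * t < 4 * ε := by
          have h4 : δ ≤ t⁻¹ * ‖t • y - k‖ + (‖k‖ - t) / t := hδb
          have h5 : t⁻¹ * ‖t • y - k‖ + (‖k‖ - t) / t < (4 * ε) / t := by
            have h3' : (‖k‖ - t) / t ≤ (2 * ε) / t :=
              div_le_div_of_nonneg_right hkt htpos.le
            have := h2
            rw [← heq]
            linarith
          have := lt_of_le_of_lt h4 h5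
          rwa [lt_div_iff₀ htpos] at this
        exact hstrict
    -- conclude contradiction
    have htset : r ≤ 2 * t := by linarith
    have hfin : 4 * ε ≤ δ * t / 2 := by
      have : 4 * ε ≤ δ * r / 4 := by linarith
      nlinarith
    nlinarith [mul_pos hδ0 htpos]
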